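/- Let K/k be a separable field extension of finite degree n. Then there exists a set {L_1, …, L_r} of intermediate fields of K/k, with r ≤ n, such that for every intermediate field L of K/k there exists a subset I_L ⊆ {1, …, r} with L = ⋂_{i∈I_L} L_i (with the convention that the intersection over the empty set is K). -/

import Mathlib

open IntermediateField

/-- Key lemma: if `x : K` is fixed by every `F`-algebra embedding of `K` into an
algebraically closed extension `E` of `K`, and `K/F` is separable finite, then `x`
lies in the image of `F`. -/
lemma fixed_of_all_algHom {F K E : Type*} [Field F] [Field K] [Field E]
    [Algebra F K] [Algebra F E] [Algebra K E] [IsScalarTower F K E] [IsAlgClosed E]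
    [FiniteDimensional F K] [Algebra.IsSeparable F K] {x : K}
    (h : ∀ σ : K →ₐ[F] E, σ x = algebraMap K E x) : x ∈ (algebraMap F K).range := by
  by_contra hx
  have hint : IsIntegral F x := Algebra.IsIntegral.isIntegral x
  have hsep : (minpoly F x).Separable := Algebra.IsSeparable.isSeparable F x
  have hdeg : 2 ≤ (minpoly F x).natDegree := by
    have h1 : (minpoly F x).natDegree ≠ 1 := fun h1 =>
      hx ((minpoly.natDegree_eq_one_iff).mp h1)
    have h0 : (minpoly F x).natDegree ≠ 0 := (minpoly.natDegree_pos hint).ne'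
    omega
  -- the minimal polynomial has `natDegree` distinct roots in `E`
  have hcard : Fintype.card ((minpoly F x).rootSet E) = (minpoly F x).natDegree := by
    have : ((minpoly F x).map (algebraMap F E)).Splits := IsAlgClosed.splits _
    exact Polynomial.card_rootSet_eq_natDegree hsep this
  have hxmem : algebraMap K E x ∈ (minpoly F x).rootSet E := by
    rw [Polynomial.mem_rootSet]
    refine ⟨minpoly.ne_zero hint, ?_⟩
    rw [Polynomial.aeval_algebraMap_apply, minpoly.aeval, map_zero]
  -- find another root
  obtain ⟨⟨y, hy⟩, hyne⟩ : ∃ y : (minpoly F x).rootSet E, (y : E) ≠ algebraMap K E x := by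
    by_contra hall
    push_neg at hall
    have : Fintype.card ((minpoly F x).rootSet E) ≤ 1 :=
      Fintype.card_le_one_iff.mpr fun a b => Subtype.ext ((hall a).trans (hall b).symm)
    omega
  have hyne' : y ≠ algebraMap K E x := hyne
  have hyaeval : Polynomial.aeval y (minpoly F x) = 0 := by
    rw [Polynomial.mem_rootSet] at hy; exact hy.2
  obtain ⟨σ, hσ⟩ := IntermediateField.exists_algHom_of_splits_of_aeval
    (F := F) (E := K) (K := E)
    (fun s => ⟨Algebra.IsIntegral.isIntegral s, IsAlgClosed.splits _⟩) hyaeval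
  exact hyne' (hσ ▸ h σ)

theorem stmt_5 {k K : Type*} [Field k] [Field K] [Algebra k K]
    [FiniteDimensional k K] [Algebra.IsSeparable k K] :
    ∃ (r : ℕ) (L : Fin r → IntermediateField k K), r ≤ Module.finrank k K ∧
      ∀ M : IntermediateField k K, ∃ I : Finset (Fin r), M = ⨅ i ∈ I, L i := by
  classical
  set E := AlgebraicClosure K
  haveI : Fintype (K →ₐ[k] E) := minpoly.AlgHom.fintype k K E
  set r := Fintype.card (K →ₐ[k] E) with hr
  have hcard : r = Module.finrank k K := by
    rw [hr, ← Nat.card_eq_fintype_card]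
    exact Field.finSepDegree_eq_finrank_of_isSeparable k K
  let e : Fin r ≃ (K →ₐ[k] E) := (Fintype.equivFin _).symm
  let ι : K →ₐ[k] E := IsScalarTower.toAlgHom k K E
  -- the fixed intermediate field of an embedding
  let L' : (K →ₐ[k] E) → IntermediateField k K := fun σ =>
    (AlgHom.equalizer σ ι).toIntermediateField (fun x hx => by
      show σ x⁻¹ = ι x⁻¹
      rw [map_inv₀, map_inv₀, hx])
  have memL' : ∀ (σ : K →ₐ[k] E) (x : K), x ∈ L' σ ↔ σ x = ι x := fun _ _ => Iff.rfl
  refine ⟨r, fun i => L' (e i), hcard.le, fun M => ?_⟩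
  refine ⟨Finset.univ.filter (fun i => ∀ m ∈ M, (e i) m = ι m), ?_⟩
  apply le_antisymm
  · refine le_iInf fun i => le_iInf fun hi => fun m hm => ?_
    rw [Finset.mem_filter] at hi
    exact hi.2 m hm
  · intro x hx
    have hxi : ∀ i ∈ Finset.univ.filter (fun i => ∀ m ∈ M, (e i) m = ι m),
        x ∈ L' (e i) := fun i hi =>
      (iInf₂_le (f := fun i (_ : i ∈ Finset.univ.filter
        (fun i => ∀ m ∈ M, (e i) m = ι m)) => L' (e i)) i hi) hx
    -- use the key lemma over the base field `M`
    haveI : FiniteDimensional M K := FiniteDimensional.right k M K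
    haveI : Algebra.IsSeparable M K := Algebra.isSeparable_tower_top_of_isSeparable k M K
    have key : x ∈ (algebraMap M K).range := by
      apply fixed_of_all_algHom (F := M) (E := E)
      intro τ
      have hfix : e.symm (τ.restrictScalars k) ∈
          Finset.univ.filter (fun i => ∀ m ∈ M, (e i) m = ι m) := by
        rw [Finset.mem_filter]
        refine ⟨Finset.mem_univ _, fun m hm => ?_⟩
        simp only [Equiv.apply_symm_apply]
        show τ m = ι m
        have hmm : m = algebraMap M K ⟨m, hm⟩ := rfl
        rw [hmm, τ.commutes]
        rfl
      have hmem := hxi _ hfix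
      rw [memL'] at hmem
      simp only [Equiv.apply_symm_apply] at hmem
      exact hmem
    obtain ⟨y, hy⟩ := key
    rw [← hy]
    exact y.2
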